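/- arXiv:math/0007142 — 5 statements merged into one kernel-verified Lean document; each statement's English description precedes it below -/
import Mathlib

section
/- For a zero-dimensional ideal I in a polynomial ring k[x₁,…,xₙ] over a field k, the number of points of the vanishing set of I in the algebraic closure of k is at most the k-vector space dimension of k[x₁,…,xₙ]/I. -/
/-- For a zero-dimensional ideal `I` in `k[x₁,…,xₙ]`, the number of points of `V(I)` in the
algebraic closure of `k` is at most `dim_k k[x₁,…,xₙ]/I`. -/
theorem stmt_1 {k : Type*} [Field k] (n : ℕ) (I : Ideal (MvPolynomial (Fin n) k))
    (hfin : FiniteDimensional k (MvPolynomial (Fin n) k ⧸ I)) :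
    ({ξ : Fin n → AlgebraicClosure k | ∀ f ∈ I, MvPolynomial.aeval ξ f = 0}).Finite ∧
    ({ξ : Fin n → AlgebraicClosure k | ∀ f ∈ I, MvPolynomial.aeval ξ f = 0}).ncard ≤
      Module.finrank k (MvPolynomial (Fin n) k ⧸ I) := by
  classical
  set K := AlgebraicClosure k
  set A := MvPolynomial (Fin n) k ⧸ I
  set S : Set (Fin n → K) := {ξ | ∀ f ∈ I, MvPolynomial.aeval ξ f = 0}
  -- the map from points to algebra homs
  let Φ : S → (A →ₐ[k] K) := fun ξ =>
    Ideal.Quotient.liftₐ I (MvPolynomial.aeval (ξ : Fin n → K)) ξ.2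
  have hΦmk : ∀ (ξ : S) (f : MvPolynomial (Fin n) k),
      Φ ξ (Ideal.Quotient.mk I f) = MvPolynomial.aeval (ξ : Fin n → K) f := fun ξ f =>
    Ideal.Quotient.liftₐ_apply _ _ _ _
  have hΦinj : Function.Injective Φ := by
    intro ξ η h
    ext i
    have := congrArg (fun φ : A →ₐ[k] K => φ (Ideal.Quotient.mk I (MvPolynomial.X i))) h
    simpa [hΦmk] using this
  -- the algebra homs are linearly independent over K, hence finite and bounded in number
  have hli : LinearIndependent K (AlgHom.toLinearMap : (A →ₐ[k] K) → A →ₗ[k] K) :=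
    linearIndependent_toLinearMap k A K
  haveI : Module.Finite K (A →ₗ[k] K) := Module.Finite.linearMap k K A K
  have hcard : Cardinal.mk (A →ₐ[k] K) ≤ Module.finrank K (A →ₗ[k] K) :=
    hli.cardinalMk_le_finrank
  rw [Module.finrank_linearMap_self] at hcard
  have hfinhom : Finite (A →ₐ[k] K) := by
    rw [← Cardinal.lt_aleph0_iff_finite]
    exact hcard.trans_lt (Cardinal.nat_lt_aleph0 _)
  have hSfin : S.Finite := by
    rw [← Set.finite_coe_iff]
    exact Finite.of_injective Φ hΦinj
  refine ⟨hSfin, ?_⟩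
  show S.ncard ≤ Module.finrank k A
  have h1 : S.ncard = Nat.card S := Nat.card_coe_set_eq S ▸ rfl
  have h2 : Nat.card S ≤ Nat.card (A →ₐ[k] K) := Nat.card_le_card_of_injective Φ hΦinj
  have h3 : Nat.card (A →ₐ[k] K) ≤ Module.finrank k A := by
    have := Cardinal.toNat_le_toNat hcard (Cardinal.nat_lt_aleph0 _)
    simpa [Nat.card, Module.finrank] using this
  omega
end

section
/- (Stickelberger, eigenvalue part) Let k be an algebraically closed field, I a zero-dimensional radical ideal in k[x₁,…,xₙ], A = k[x₁,…,xₙ]/I, and h ∈ k[x₁,…,xₙ]. Then the set of eigenvalues of the multiplication operator m_h on A equals the set of values {h(ξ) : ξ ∈ V(I)}. -/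
set_option maxHeartbeats 4000000
set_option synthInstance.maxHeartbeats 400000

/-- (Stickelberger, eigenvalue part) For an algebraically closed field `k`, a zero-dimensional
radical ideal `I ⊆ k[x₁,…,xₙ]`, and `h ∈ k[x₁,…,xₙ]`, the eigenvalues of the multiplication
operator `m_h` on `A = k[x₁,…,xₙ]/I` are exactly the values `h(ξ)` for `ξ ∈ V(I)`. -/
theorem stmt_3 {k : Type*} [Field k] [IsAlgClosed k] (n : ℕ)
    (I : Ideal (MvPolynomial (Fin n) k))
    (hrad : I.IsRadical)
    (hfin : FiniteDimensional k (MvPolynomial (Fin n) k ⧸ I))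
    (h : MvPolynomial (Fin n) k) :
    {μ : k | Module.End.HasEigenvalue
        (LinearMap.mulLeft k (Ideal.Quotient.mk I h)) μ} =
      (fun ξ => MvPolynomial.eval ξ h) ''
        {ξ : Fin n → k | ∀ f ∈ I, MvPolynomial.eval ξ f = 0} := by
  classical
  -- key rewriting: the operator m_h - μ • 1 equals m_{h - C μ}
  have key : ∀ μ : k, (LinearMap.mulLeft k (Ideal.Quotient.mk I h)
      - μ • (1 : Module.End k (MvPolynomial (Fin n) k ⧸ I)))
      = LinearMap.mulLeft k (Ideal.Quotient.mk I (h - MvPolynomial.C μ)) := by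
    intro μ
    ext a
    simp only [LinearMap.sub_apply, LinearMap.smul_apply, Module.End.one_apply,
      LinearMap.mulLeft_apply, RingHom.map_sub, sub_mul]
    congr 1
    rw [← MvPolynomial.algebraMap_eq, Ideal.Quotient.mk_algebraMap, ← Algebra.smul_def]
  ext μ
  constructor
  · intro hμ
    -- from eigenvalue: m_{h - C μ} not injective
    have hne : Module.End.eigenspace
        (LinearMap.mulLeft k (Ideal.Quotient.mk I h)) μ ≠ ⊥ := hμ
    rw [Module.End.eigenspace_def, key μ] at hne
    obtain ⟨v, hv, hv0⟩ := Submodule.exists_mem_ne_zero_of_ne_bot hne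
    have hvz : (Ideal.Quotient.mk I (h - MvPolynomial.C μ)) * v = 0 := hv
    set g := h - MvPolynomial.C μ with hgdef
    set J := I ⊔ Ideal.span {g} with hJ
    -- the ideal J = I + (g) is proper
    have hJne : J ≠ ⊤ := by
      intro htop
      have h1 : (1 : MvPolynomial (Fin n) k) ∈ J := htop ▸ Submodule.mem_top
      rw [hJ] at h1
      obtain ⟨i, hi, j, hj, hij⟩ := Submodule.mem_sup.mp h1
      obtain ⟨p, rfl⟩ := Ideal.mem_span_singleton'.mp hj
      -- then mk g is a unit, contradicting g * v = 0 with v ≠ 0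
      have hunit : (Ideal.Quotient.mk I p) * (Ideal.Quotient.mk I g) = 1 := by
        have := congrArg (Ideal.Quotient.mk I) hij
        rw [RingHom.map_add, RingHom.map_one, RingHom.map_mul, Ideal.Quotient.eq_zero_iff_mem.mpr hi,
          zero_add] at this
        exact this
      apply hv0
      have h2 : (Ideal.Quotient.mk I p) * ((Ideal.Quotient.mk I g) * v) = v := by
        rw [← mul_assoc, hunit, one_mul]
      rw [hvz, mul_zero] at h2
      exact h2.symm
    -- weak Nullstellensatz: zeroLocus J nonempty
    have hrad' : J.radical ≠ ⊤ := fun htop => hJne (Ideal.radical_eq_top.mp htop)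
    have hVne : (MvPolynomial.zeroLocus k J).Nonempty := by
      by_contra hemp
      rw [Set.not_nonempty_iff_eq_empty] at hemp
      apply hrad'
      rw [← MvPolynomial.vanishingIdeal_zeroLocus_eq_radical (K := k), hemp]
      ext p
      simp [MvPolynomial.mem_vanishingIdeal_iff]
    obtain ⟨ξ, hξ⟩ := hVne
    refine ⟨ξ, fun f hf => by simpa [MvPolynomial.coe_aeval_eq_eval] using hξ f (Ideal.mem_sup_left hf), ?_⟩
    have hg : MvPolynomial.eval ξ g = 0 :=
      by simpa [MvPolynomial.coe_aeval_eq_eval] using hξ g (Ideal.mem_sup_right (Ideal.subset_span rfl))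
    rw [hgdef, (MvPolynomial.eval ξ).map_sub, MvPolynomial.eval_C, sub_eq_zero] at hg
    exact hg
  · rintro ⟨ξ, hξ, rfl⟩
    set μ := MvPolynomial.eval ξ h with hμdef
    set g := h - MvPolynomial.C μ with hgdef
    have hgeval : MvPolynomial.eval ξ g = 0 := by
      rw [hgdef, (MvPolynomial.eval ξ).map_sub, MvPolynomial.eval_C, sub_self]
    -- m_g not surjective
    have hnsurj : ¬ Function.Surjective
        (LinearMap.mulLeft k (Ideal.Quotient.mk I g)) := by
      intro hsurj
      obtain ⟨a, ha⟩ := hsurj 1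
      rw [LinearMap.mulLeft_apply] at ha
      obtain ⟨q, rfl⟩ := Ideal.Quotient.mk_surjective a
      rw [← RingHom.map_mul] at ha
      have hmem : g * q - 1 ∈ I := by
        rw [← Ideal.Quotient.eq_zero_iff_mem, RingHom.map_sub, ha, RingHom.map_one,
          sub_self]
      have hz := hξ _ hmem
      rw [(MvPolynomial.eval ξ).map_sub, (MvPolynomial.eval ξ).map_mul, hgeval,
        zero_mul, (MvPolynomial.eval ξ).map_one] at hz
      simpa using hz
    have hninj : ¬ Function.Injective
        (LinearMap.mulLeft k (Ideal.Quotient.mk I g)) := fun hinj =>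
      hnsurj ((LinearMap.injective_iff_surjective).mp hinj)
    rw [← LinearMap.ker_eq_bot] at hninj
    show Module.End.HasEigenvalue _ μ
    rw [Module.End.hasEigenvalue_iff, Module.End.eigenspace_def, key μ]
    exact hninj
end

section
/- (Shape Lemma, radicality criterion) With I generated by g(x₁), x₂ − g₂(x₁), …, xₙ − gₙ(x₁) as above, the ideal I is radical if and only if g is squarefree. -/
/-- (Shape Lemma, radicality criterion) With `I ⊆ k[x₀,…,xₙ]` generated by
`g(x₀), x₁ − g₁(x₀), …, xₙ − gₙ(x₀)`, where `k` is perfect, `g` monic of degree `d`, and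
`deg gᵢ < d`, the ideal `I` is radical if and only if `g` is squarefree. -/
theorem stmt_8 {k : Type*} [Field k] [PerfectField k] (n d : ℕ) (g : Polynomial k)
    (hg : g.Monic) (hd : g.natDegree = d)
    (gi : Fin n → Polynomial k) (hgi : ∀ i, (gi i).natDegree < d)
    (I : Ideal (MvPolynomial (Fin (n + 1)) k))
    (hI : I = Ideal.span
      ({Polynomial.aeval (MvPolynomial.X 0) g} ∪
        Set.range (fun i : Fin n =>
          MvPolynomial.X i.succ -
            Polynomial.aeval (MvPolynomial.X (0 : Fin (n + 1))) (gi i)))) :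
    I.IsRadical ↔ Squarefree g := by
  classical
  set σ : Polynomial k →ₐ[k] MvPolynomial (Fin (n + 1)) k :=
    Polynomial.aeval (MvPolynomial.X 0) with hσ
  set ψ : MvPolynomial (Fin (n + 1)) k →ₐ[k] Polynomial k :=
    MvPolynomial.aeval (fun j : Fin (n + 1) =>
      Fin.cases Polynomial.X (fun i => gi i) j) with hψ
  have hψσ : ∀ q : Polynomial k, ψ (σ q) = q := by
    have : ψ.comp σ = AlgHom.id k (Polynomial k) := by
      apply Polynomial.algHom_ext
      simp [hψ, hσ]
    intro q
    exact AlgHom.congr_fun this q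
  -- generators in I
  have hgI : σ g ∈ I := by
    rw [hI]; exact Ideal.subset_span (Or.inl rfl)
  have hrelI : ∀ i : Fin n,
      MvPolynomial.X i.succ - σ (gi i) ∈ I := by
    intro i; rw [hI]; exact Ideal.subset_span (Or.inr ⟨i, rfl⟩)
  -- key: mk I = mk I ∘ σ ∘ ψ
  have hkey : (Ideal.Quotient.mkₐ k I) =
      (Ideal.Quotient.mkₐ k I).comp (σ.comp ψ) := by
    apply MvPolynomial.algHom_ext
    intro j
    induction j using Fin.cases with
    | zero => simp [hψ, hσ]
    | succ i =>
        have : Ideal.Quotient.mk I (MvPolynomial.X i.succ)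
            = Ideal.Quotient.mk I (σ (gi i)) := Ideal.Quotient.eq.mpr (hrelI i)
        simpa [hψ] using this
  have hkey' : ∀ p, Ideal.Quotient.mk I p = Ideal.Quotient.mk I (σ (ψ p)) := by
    intro p
    have := congrArg (fun f : MvPolynomial (Fin (n+1)) k →ₐ[k] _ => f p) hkey
    simpa using this
  set Φ : MvPolynomial (Fin (n + 1)) k →ₐ[k] Polynomial k ⧸ Ideal.span {g} :=
    (Ideal.Quotient.mkₐ k (Ideal.span {g})).comp ψ with hΦ
  have hker : RingHom.ker Φ = I := by
    ext p
    constructor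
    · intro hp
      have hp' : ψ p ∈ Ideal.span {g} := by
        have : Ideal.Quotient.mk (Ideal.span {g}) (ψ p) = 0 := hp
        exact (Ideal.Quotient.eq_zero_iff_mem).mp this
      obtain ⟨h, hh⟩ := Ideal.mem_span_singleton'.mp hp'
      have h1 : p - σ (ψ p) ∈ I := Ideal.Quotient.eq.mp (hkey' p)
      have h2 : σ (ψ p) ∈ I := by
        rw [← hh, map_mul]
        exact I.mul_mem_left _ hgI
      simpa using I.add_mem h1 h2
    · intro hp
      rw [hI] at hp
      refine Submodule.span_induction ?_ ?_ ?_ ?_ hp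
      · rintro x (rfl | ⟨i, rfl⟩)
        · show Ideal.Quotient.mk _ (ψ (σ g)) = 0
          rw [hψσ]
          exact Ideal.Quotient.eq_zero_iff_mem.mpr (Ideal.subset_span rfl)
        · show Ideal.Quotient.mk _ (ψ (MvPolynomial.X i.succ - σ (gi i))) = 0
          rw [map_sub, hψσ]
          simp [hψ]
      · exact map_zero Φ
      · intro x y _ _ hx hy
        show Φ (x + y) = 0
        rw [map_add, hx, hy, add_zero]
      · intro a x _ hx
        show Φ (a • x) = 0
        rw [smul_eq_mul, map_mul, hx, mul_zero]
  have hsurj : Function.Surjective Φ := by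
    intro y
    obtain ⟨q, rfl⟩ := Ideal.Quotient.mk_surjective y
    exact ⟨σ q, by simp [hΦ, hψσ]⟩
  have e : (MvPolynomial (Fin (n + 1)) k ⧸ I) ≃ₐ[k] Polynomial k ⧸ Ideal.span {g} := by
    rw [← hker]
    exact Ideal.quotientKerAlgEquivOfSurjective hsurj
  rw [Ideal.isRadical_iff_quotient_reduced,
    ← isRadical_iff_squarefree_of_ne_zero hg.ne_zero,
    isRadical_iff_span_singleton, Ideal.isRadical_iff_quotient_reduced]
  constructor
  · intro h
    exact isReduced_of_injective e.symm.toRingHom e.symm.injective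
  · intro h
    exact isReduced_of_injective e.toRingHom e.injective
end

section
/- Conversely, a nonzero vector (p₁₂, p₁₃, p₁₄, p₂₃, p₂₄, p₃₄) ∈ k⁶ satisfying p₁₂p₃₄ − p₁₃p₂₄ + p₁₄p₂₃ = 0 is, up to scalar, the vector of maximal minors of some 2×4 matrix of rank 2 (i.e., arises from a 2-plane in k⁴). -/
lemma aux_rank_two {k : Type*} [Field k] (A : Matrix (Fin 2) (Fin 4) k) (i j : Fin 4)
    (h : A 0 i * A 1 j - A 0 j * A 1 i ≠ 0) : A.rank = 2 := by
  refine le_antisymm (by simpa using A.rank_le_card_height) ?_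
  set E : Matrix (Fin 4) (Fin 2) k := fun l m => if l = ![i, j] m then 1 else 0 with hE
  have hB : A * E = A.submatrix id ![i, j] := by
    ext a b
    rw [Matrix.mul_apply]; simp [hE]
  have hdet : (A.submatrix id ![i, j]).det ≠ 0 := by
    rw [Matrix.det_fin_two]
    simpa using h
  have hrk : (A.submatrix id ![i, j]).rank = 2 := by
    have := Matrix.rank_of_isUnit (A.submatrix id ![i, j])
      ((Matrix.isUnit_iff_isUnit_det _).mpr (isUnit_iff_ne_zero.mpr hdet))
    simpa using this
  calc (2 : ℕ) = (A * E).rank := by rw [hB, hrk]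
    _ ≤ A.rank := Matrix.rank_mul_le_left A E

/-- Conversely, a nonzero vector `(p₁₂,p₁₃,p₁₄,p₂₃,p₂₄,p₃₄)` satisfying the Plücker relation
`p₁₂p₃₄ − p₁₃p₂₄ + p₁₄p₂₃ = 0` is, up to a nonzero scalar, the vector of 2×2 maximal minors
of some 2×4 matrix of rank 2. -/
theorem stmt_15 {k : Type*} [Field k] (p12 p13 p14 p23 p24 p34 : k)
    (hne : ¬(p12 = 0 ∧ p13 = 0 ∧ p14 = 0 ∧ p23 = 0 ∧ p24 = 0 ∧ p34 = 0))
    (hrel : p12 * p34 - p13 * p24 + p14 * p23 = 0) :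
    ∃ (A : Matrix (Fin 2) (Fin 4) k) (c : k), A.rank = 2 ∧ c ≠ 0 ∧
      A 0 0 * A 1 1 - A 0 1 * A 1 0 = c * p12 ∧
      A 0 0 * A 1 2 - A 0 2 * A 1 0 = c * p13 ∧
      A 0 0 * A 1 3 - A 0 3 * A 1 0 = c * p14 ∧
      A 0 1 * A 1 2 - A 0 2 * A 1 1 = c * p23 ∧
      A 0 1 * A 1 3 - A 0 3 * A 1 1 = c * p24 ∧
      A 0 2 * A 1 3 - A 0 3 * A 1 2 = c * p34 := by
  by_cases h12 : p12 ≠ 0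
  · refine ⟨![![p12, 0, -p23, -p24], ![0, p12, p13, p14]], p12,
      aux_rank_two _ 0 1 (by simpa using mul_ne_zero h12 h12), h12,
      ?_, ?_, ?_, ?_, ?_, ?_⟩ <;> simp <;> first | ring1 | (linear_combination hrel) | (linear_combination -hrel)
  · push_neg at h12
    by_cases h13 : p13 ≠ 0
    · refine ⟨![![p13, p23, 0, -p34], ![0, p12, p13, p14]], p13,
        aux_rank_two _ 0 2 (by simpa using mul_ne_zero h13 h13), h13,
        ?_, ?_, ?_, ?_, ?_, ?_⟩ <;> simp <;> first | ring1 | (linear_combination hrel) | (linear_combination -hrel)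
    · push_neg at h13
      by_cases h14 : p14 ≠ 0
      · refine ⟨![![p14, p24, p34, 0], ![0, p12, p13, p14]], p14,
          aux_rank_two _ 0 3 (by simpa using mul_ne_zero h14 h14), h14,
          ?_, ?_, ?_, ?_, ?_, ?_⟩ <;> simp <;> first | ring1 | (linear_combination hrel) | (linear_combination -hrel)
      · push_neg at h14
        by_cases h23 : p23 ≠ 0
        · refine ⟨![![p13, p23, 0, -p34], ![-p12, 0, p23, p24]], p23,
            aux_rank_two _ 1 2 (by simpa using mul_ne_zero h23 h23), h23,
            ?_, ?_, ?_, ?_, ?_, ?_⟩ <;> simp <;> first | ring1 | (linear_combination hrel) | (linear_combination -hrel)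
        · push_neg at h23
          by_cases h24 : p24 ≠ 0
          · refine ⟨![![p14, p24, p34, 0], ![-p12, 0, p23, p24]], p24,
              aux_rank_two _ 1 3 (by simpa using mul_ne_zero h24 h24), h24,
              ?_, ?_, ?_, ?_, ?_, ?_⟩ <;> simp <;> first | ring1 | (linear_combination hrel) | (linear_combination -hrel)
          · push_neg at h24
            have h34 : p34 ≠ 0 := fun h => hne ⟨h12, h13, h14, h23, h24, h⟩
            refine ⟨![![p14, p24, p34, 0], ![-p13, -p23, 0, p34]], p34,
              aux_rank_two _ 2 3 (by simpa using mul_ne_zero h34 h34), h34,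
              ?_, ?_, ?_, ?_, ?_, ?_⟩ <;> simp <;> first | ring1 | (linear_combination hrel) | (linear_combination -hrel)
end

section
/- Let A be a finite-dimensional commutative ℝ-algebra that is a product of fields, A ≅ ℝ^a × ℂ^b (as ℝ-algebras). Then the trace form S₁(f,g) = trace(m_{fg}) has rank a + 2b and signature a; in particular, the signature of the trace form of A equals the number of real points and the rank equals the total number of points. -/
open LinearMap Finset

lemma trace_mulLeft_pi_real (a : ℕ) (f : Fin a → ℝ) :
    trace ℝ (Fin a → ℝ) (mulLeft ℝ f) = ∑ i, f i := by
  rw [trace_eq_matrix_trace ℝ (Pi.basisFun ℝ (Fin a))]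
  simp [Matrix.trace, Algebra.leftMulMatrix_apply, LinearMap.toMatrix_apply, Pi.single_apply]

lemma trace_mulLeft_pi_complex (b : ℕ) (g : Fin b → ℂ) :
    trace ℝ (Fin b → ℂ) (mulLeft ℝ g) = 2 * ∑ j, (g j).re := by
  rw [trace_eq_matrix_trace ℝ (Pi.basis fun _ : Fin b => Complex.basisOneI)]
  simp only [Matrix.trace, Matrix.diag, Algebra.leftMulMatrix_apply, LinearMap.toMatrix_apply,
    Pi.basis_apply, Pi.basis_repr]
  rw [← Finset.univ_sigma_univ, Finset.sum_sigma]
  simp [Fin.sum_univ_two, Pi.single_apply, Complex.basisOneI, mul_comm, mul_two,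
    Finset.sum_add_distrib]
  ring

lemma trace_mulLeft_prod (a b : ℕ) (z : (Fin a → ℝ) × (Fin b → ℂ)) :
    trace ℝ ((Fin a → ℝ) × (Fin b → ℂ)) (mulLeft ℝ z)
      = (∑ i, z.1 i) + 2 * ∑ j, (z.2 j).re := by
  have h : mulLeft ℝ z = (mulLeft ℝ z.1).prodMap (mulLeft ℝ z.2) := LinearMap.ext fun y => rfl
  rw [h, trace_prodMap', trace_mulLeft_pi_real, trace_mulLeft_pi_complex]

/-- For the finite-dimensional commutative ℝ-algebra `A = ℝᵃ × ℂᵇ`, the trace form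
`S₁(f,g) = trace(m_{fg})` has rank `a + 2b` and signature `a`: there is a basis of `A`
diagonalizing `S₁` with `a + b` positive diagonal entries and `b` negative ones (hence no
zero entries), so the signature equals the number `a` of real points and the rank equals
the total number `a + b` of points. -/
theorem stmt_19 (a b : ℕ) :
    let A := (Fin a → ℝ) × (Fin b → ℂ)
    let S : A → A → ℝ := fun f g => LinearMap.trace ℝ A (LinearMap.mulLeft ℝ (f * g))
    ∃ e : Module.Basis (Fin (a + 2 * b)) ℝ A,
      (∀ i j, i ≠ j → S (e i) (e j) = 0) ∧
      (Finset.univ.filter fun i => 0 < S (e i) (e i)).card = a + b ∧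
      (Finset.univ.filter fun i => S (e i) (e i) < 0).card = b := by
  intro A S
  have hS : ∀ x y : A, S x y = (∑ i, x.1 i * y.1 i) + 2 * ∑ j, (x.2 j * y.2 j).re := by
    intro x y
    show trace ℝ A (mulLeft ℝ (x * y)) = _
    rw [trace_mulLeft_prod]
    rfl
  set ι := Fin a ⊕ (Σ _ : Fin b, Fin 2) with hι
  set b0 : Module.Basis ι ℝ A :=
    (Pi.basisFun ℝ (Fin a)).prod (Pi.basis fun _ : Fin b => Complex.basisOneI) with hb0
  have h1 : ∀ i : Fin a, (b0 (Sum.inl i) : A) = (Pi.single i 1, 0) := by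
    intro i
    refine Prod.ext ?_ ?_
    · rw [hb0, Module.Basis.prod_apply_inl_fst, Pi.basisFun_apply]
    · rw [hb0, Module.Basis.prod_apply_inl_snd]
  have h2 : ∀ (j : Fin b) (k : Fin 2),
      (b0 (Sum.inr ⟨j, k⟩) : A) = (0, Pi.single j (Complex.basisOneI k)) := by
    intro j k
    refine Prod.ext ?_ ?_
    · rw [hb0, Module.Basis.prod_apply_inr_fst]
    · rw [hb0, Module.Basis.prod_apply_inr_snd, Pi.basis_apply]
  have hRR : ∀ i i' : Fin a,
      S (Pi.single i 1, 0) (Pi.single i' 1, 0) = if i = i' then 1 else 0 := by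
    intro i i'
    rw [hS]
    simp [Pi.single_apply, ite_and, mul_ite, ite_mul, Finset.sum_ite_eq, eq_comm]
  have hCC : ∀ (j j' : Fin b) (z z' : ℂ),
      S (0, Pi.single j z) (0, Pi.single j' z') = if j = j' then 2 * (z * z').re else 0 := by
    intro j j' z z'
    rw [hS]
    simp [Pi.single_apply, ite_and, mul_ite, ite_mul, apply_ite Complex.re, Finset.sum_ite_eq,
      eq_comm, mul_ite]
  have hRC : ∀ (i : Fin a) (j : Fin b) (z : ℂ),
      S (Pi.single i 1, 0) (0, Pi.single j z) = 0 := by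
    intro i j z
    rw [hS]
    simp
  have hCR : ∀ (j : Fin b) (z : ℂ) (i : Fin a),
      S (0, Pi.single j z) (Pi.single i 1, 0) = 0 := by
    intro j z i
    rw [hS]
    simp
  let σ : ι ≃ Fin (a + 2 * b) :=
    (Equiv.sumCongr (Equiv.refl (Fin a))
      ((Equiv.sigmaEquivProd (Fin b) (Fin 2)).trans finProdFinEquiv)).trans
      (finSumFinEquiv.trans (finCongr (by ring)))
  have hdiag : ∀ k : ι, S (b0 k) (b0 k)
      = Sum.elim (fun _ : Fin a => (1:ℝ)) (fun s : Σ _ : Fin b, Fin 2 =>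
          if s.2 = 0 then 2 else -2) k := by
    rintro (i | ⟨j, k⟩)
    · rw [h1, hRR]; simp
    · rw [h2, hCC]
      simp only [if_pos rfl, Sum.elim_inr]
      fin_cases k <;> norm_num [Complex.basisOneI, Complex.I_mul_I]
  refine ⟨b0.reindex σ, ?_, ?_, ?_⟩
  · intro i j hij
    rw [Module.Basis.reindex_apply, Module.Basis.reindex_apply]
    have hkl : σ.symm i ≠ σ.symm j := fun h => hij (by simpa using congrArg σ h)
    rcases hk : σ.symm i with k | ⟨jk, sk⟩ <;> rcases hl : σ.symm j with l | ⟨jl, sl⟩ <;>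
      rw [hk, hl] at hkl
    · rw [h1, h1, hRR, if_neg fun h => hkl (by rw [h])]
    · rw [h1, h2, hRC]
    · rw [h2, h1, hCR]
    · rw [h2, h2, hCC]
      rcases eq_or_ne jk jl with rfl | hj
      · have hs : sk ≠ sl := fun h => hkl (by rw [h])
        rw [if_pos rfl]
        fin_cases sk <;> fin_cases sl <;> simp_all [Complex.basisOneI]
      · rw [if_neg hj]
  · have hc : (Finset.univ.filter fun i => 0 < S ((b0.reindex σ) i) ((b0.reindex σ) i)).card
        = (Finset.univ.filter fun k : ι => 0 < S (b0 k) (b0 k)).card := by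
      apply Finset.card_equiv σ.symm
      intro i
      simp [Module.Basis.reindex_apply]
    rw [hc]
    simp_rw [hdiag]
    rw [Finset.card_filter, Fintype.sum_sum_type, ← Finset.univ_sigma_univ, Finset.sum_sigma]
    simp only [Sum.elim_inl, Sum.elim_inr, Fin.sum_univ_two]
    norm_num
  · have hc : (Finset.univ.filter fun i => S ((b0.reindex σ) i) ((b0.reindex σ) i) < 0).card
        = (Finset.univ.filter fun k : ι => S (b0 k) (b0 k) < 0).card := by
      apply Finset.card_equiv σ.symm
      intro i
      simp [Module.Basis.reindex_apply]
    rw [hc]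
    simp_rw [hdiag]
    rw [Finset.card_filter, Fintype.sum_sum_type, ← Finset.univ_sigma_univ, Finset.sum_sigma]
    simp only [Sum.elim_inl, Sum.elim_inr, Fin.sum_univ_two]
    norm_num
end
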